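/- Let m1, m2 be positive integers with m2 even, and for i ∈ I(m) define the Lagrange function L_i(θ,φ) = (1/(m1m2)) Σ_{γ ∈ Γ(m)} conj(χ_γ(i))/‖χ_γ‖² · X_γ(θ,φ). Then L_j(i1π/m1, i2π/m2) = δ_{ij} for all i, j ∈ I(m), and the functions L_i, i ∈ I(m), form a basis of span{X_γ : γ ∈ Γ(m)}. -/

import Mathlib

open Real Complex Finset

/-- The index set I(m) as a finset. -/
def indexSet (m1 m2 : ℕ) : Finset (ℕ × ℕ) :=
  (Finset.range (m1 + 1) ×ˢ Finset.range (2 * m2)).filter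
    (fun i => ((i.1 = 0 ∨ i.1 = m1) → i.2 < m2) ∧ Even (i.1 + i.2))

/-- The spectral index set Γ(m), with denominators cleared. -/
noncomputable def GammaSet (m1 m2 : ℕ) : Finset (ℤ × ℤ) :=
  ((Finset.Icc (0 : ℤ) m1) ×ˢ (Finset.Icc (-(m2 : ℤ)) m2)).filter
    (fun γ => ((1 ≤ γ.1 ∧ (m2 : ℤ) * γ.1 + (m1 : ℤ) * |γ.2| ≤ m1 * m2) ∨
        (γ.1 = 0 ∧ Even γ.2 ∧ |γ.2| < (m2 : ℤ))) ∧
      ¬((m2 : ℤ) * γ.1 + (m1 : ℤ) * γ.2 = m1 * m2 ∧ γ.2 ≠ 0))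

/-- The discretized parity-modified Fourier basis functions χ_γ. -/
noncomputable def chi (m1 m2 : ℕ) (γ : ℤ × ℤ) (i : ℕ × ℕ) : ℂ :=
  if Even γ.2 then
    (Real.cos ((γ.1 : ℝ) * i.1 * π / m1) : ℂ) *
      Complex.exp (Complex.I * γ.2 * i.2 * (π : ℂ) / m2)
  else
    Complex.I * (Real.sin ((γ.1 : ℝ) * i.1 * π / m1) : ℂ) *
      Complex.exp (Complex.I * γ.2 * i.2 * (π : ℂ) / m2)

/-- The parity-modified double Fourier basis functions X_γ. -/
noncomputable def Xbasis (γ : ℤ × ℤ) (θ φ : ℝ) : ℂ :=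
  if Even γ.2 then
    (Real.cos (γ.1 * θ) : ℂ) * Complex.exp (Complex.I * γ.2 * φ)
  else
    Complex.I * (Real.sin (γ.1 * θ) : ℂ) * Complex.exp (Complex.I * γ.2 * φ)

/-- The Lagrange functions L_i. -/
noncomputable def lagrange (m1 m2 : ℕ) (i : ℕ × ℕ) (θ φ : ℝ) : ℂ :=
  (1 / (m1 * m2 : ℂ)) * ∑ γ ∈ GammaSet m1 m2,
    (starRingEnd ℂ) (chi m1 m2 γ i) /
      (if γ.1 = 0 ∨ γ.1 = (m1 : ℤ) then 1 else 1 / 2) * Xbasis γ θ φ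


noncomputable def cex (m : ℕ) (t : ℤ) : ℂ := Complex.exp (Complex.I * t * π / m)

lemma cex_add (m : ℕ) (s t : ℤ) : cex m (s + t) = cex m s * cex m t := by
  rw [cex, cex, cex, ← Complex.exp_add]; congr 1; push_cast; ring

lemma cex_zero (m : ℕ) : cex m 0 = 1 := by simp [cex]

lemma conj_cex (m : ℕ) (t : ℤ) : (starRingEnd ℂ) (cex m t) = cex m (-t) := by
  rw [cex, cex, ← Complex.exp_conj]
  congr 1
  simp only [map_div₀, map_mul, Complex.conj_I, map_intCast, Complex.conj_ofReal, map_natCast]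
  push_cast; ring

lemma cex_one_iff {m : ℕ} (hm : 0 < m) (t : ℤ) : cex m t = 1 ↔ (2 * m : ℤ) ∣ t := by
  have hmC : (m : ℂ) ≠ 0 := Nat.cast_ne_zero.2 hm.ne'
  have hπ : (π : ℂ) ≠ 0 := Complex.ofReal_ne_zero.2 Real.pi_ne_zero
  rw [cex, Complex.exp_eq_one_iff]
  constructor
  · rintro ⟨n, hn⟩
    refine ⟨n, ?_⟩
    have h3 : (t : ℂ) * ((π : ℂ) * Complex.I) = ((2 * m * n : ℤ) : ℂ) * ((π : ℂ) * Complex.I) := by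
      field_simp at hn
      push_cast
      linear_combination ((π : ℂ) * Complex.I) * hn
    have h4 : (t : ℂ) = ((2 * m * n : ℤ) : ℂ) :=
      mul_right_cancel₀ (by simp [hπ, Complex.I_ne_zero]) h3
    exact_mod_cast h4
  · rintro ⟨n, rfl⟩
    refine ⟨n, ?_⟩
    field_simp
    push_cast
    ring

lemma cex_congr {m : ℕ} (hm : 0 < m) {s t : ℤ} (h : (2 * m : ℤ) ∣ s - t) :
    cex m s = cex m t := by
  have : cex m s = cex m (s - t) * cex m t := by rw [← cex_add]; congr 1; ring
  rw [this, (cex_one_iff hm _).2 h, one_mul]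

lemma cex_nat_mul (m : ℕ) (t : ℤ) (k : ℕ) : cex m (t * k) = cex m t ^ k := by
  induction k with
  | zero => simp [cex_zero]
  | succ n ih =>
    have : (t * (n + 1 : ℕ) : ℤ) = t * n + t := by push_cast; ring
    rw [this, cex_add, ih, pow_succ]

lemma cex_self {m : ℕ} (hm : 0 < m) : cex m m = -1 := by
  have hmC : (m : ℂ) ≠ 0 := Nat.cast_ne_zero.2 hm.ne'
  rw [cex, show Complex.I * (m : ℤ) * π / m = π * Complex.I by push_cast; field_simp]
  exact Complex.exp_pi_mul_I

noncomputable def eps (t : ℤ) : ℂ := if Even t then 1 else -1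

lemma eps_mul_self (t : ℤ) : eps t * eps t = 1 := by unfold eps; split <;> norm_num

lemma conj_eps (t : ℤ) : (starRingEnd ℂ) (eps t) = eps t := by unfold eps; split <;> simp

lemma eps_eq_of_even_sub {s t : ℤ} (h : Even (s - t)) : eps s = eps t := by
  unfold eps
  rcases Int.even_sub.1 h with h'
  by_cases hs : Even s
  · rw [if_pos hs, if_pos (h'.1 hs)]
  · rw [if_neg hs, if_neg (fun ht => hs (h'.2 ht))]

lemma cex_mul_self {m : ℕ} (hm : 0 < m) (t : ℤ) : cex m (t * m) = eps t := by
  rcases Int.even_or_odd t with ⟨a, rfl⟩ | ⟨a, rfl⟩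
  · have h1 : eps (a + a) = 1 := by rw [eps, if_pos ⟨a, rfl⟩]
    rw [h1, show ((a + a) * m : ℤ) = 2 * m * a by ring]
    exact (cex_one_iff hm _).2 ⟨a, rfl⟩
  · have h1 : eps (2 * a + 1) = -1 := by
      rw [eps, if_neg (by simp [Int.even_add_one, parity_simps])]
    rw [h1, show ((2 * a + 1) * m : ℤ) = 2 * m * a + m by ring, cex_add,
      (cex_one_iff hm _).2 ⟨a, rfl⟩, one_mul, cex_self hm]

lemma geo_sum {m : ℕ} (hm : 0 < m) (t : ℤ) :
    ∑ k ∈ Finset.range (2 * m), cex m (t * k) = if (2 * m : ℤ) ∣ t then ((2 * m : ℕ) : ℂ) else 0 := by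
  by_cases h : (2 * m : ℤ) ∣ t
  · rw [if_pos h]
    have h1 : cex m t = 1 := (cex_one_iff hm t).2 h
    simp [cex_nat_mul, h1]
  · rw [if_neg h]
    have hx : cex m t ≠ 1 := fun hc => h ((cex_one_iff hm t).1 hc)
    simp_rw [cex_nat_mul]
    rw [geom_sum_eq hx (2 * m)]
    have h2 : cex m t ^ (2 * m) = 1 := by
      rw [← cex_nat_mul]
      exact (cex_one_iff hm _).2 ⟨t, by push_cast; ring⟩
    simp [h2]

noncomputable def chF (m1 m2 : ℕ) (u v : ℤ) (k : ℕ × ℕ) : ℂ :=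
  cex m1 (u * k.1) * cex m2 (v * k.2)

lemma chF_mul (m1 m2 : ℕ) (u v u' v' : ℤ) (k : ℕ × ℕ) :
    chF m1 m2 u v k * chF m1 m2 u' v' k = chF m1 m2 (u + u') (v + v') k := by
  unfold chF
  rw [show ((u + u') * k.1 : ℤ) = u * k.1 + u' * k.1 by ring, cex_add,
    show ((v + v') * k.2 : ℤ) = v * k.2 + v' * k.2 by ring, cex_add]
  ring

lemma conj_chF (m1 m2 : ℕ) (u v : ℤ) (k : ℕ × ℕ) :
    (starRingEnd ℂ) (chF m1 m2 u v k) = chF m1 m2 (-u) (-v) k := by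
  unfold chF
  rw [map_mul, conj_cex, conj_cex]
  congr 2 <;> ring

def egrid (m1 m2 : ℕ) : Finset (ℕ × ℕ) :=
  (Finset.range (2 * m1) ×ˢ Finset.range (2 * m2)).filter (fun k => Even (k.1 + k.2))

lemma mem_egrid {m1 m2 : ℕ} {k : ℕ × ℕ} :
    k ∈ egrid m1 m2 ↔ k.1 < 2 * m1 ∧ k.2 < 2 * m2 ∧ (k.1 + k.2) % 2 = 0 := by
  simp [egrid, Finset.mem_filter, Finset.mem_product, Nat.even_iff, and_assoc]

lemma dvd_of_diff {n a b : ℤ} (h : n ∣ a - b) : n ∣ a ↔ n ∣ b := by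
  constructor <;> intro h2
  · have := dvd_sub h2 h; rwa [show a - (a - b) = b by ring] at this
  · have := dvd_add h h2; rwa [sub_add_cancel] at this

lemma not_both_dvd {m : ℕ} (hm : 0 < m) (u : ℤ) :
    ¬((2 * m : ℤ) ∣ u ∧ (2 * m : ℤ) ∣ u - m) := by
  rintro ⟨h1, h2⟩
  have h3 : (2 * m : ℤ) ∣ m := by
    have := dvd_sub h1 h2; rwa [show u - (u - m) = (m : ℤ) by ring] at this
  have := Int.le_of_dvd (by exact_mod_cast hm) h3
  omega

lemma eps_add (s t : ℤ) : eps (s + t) = eps s * eps t := by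
  unfold eps
  by_cases hs : Even s <;> by_cases ht : Even t <;>
    simp [hs, ht, Int.even_add, if_pos, if_neg] <;> tauto

lemma egrid_sum {m1 m2 : ℕ} (hm1 : 0 < m1) (hm2 : 0 < m2) (u v : ℤ) :
    ∑ k ∈ egrid m1 m2, chF m1 m2 u v k =
      if ((2 * m1 : ℤ) ∣ u ∧ (2 * m2 : ℤ) ∣ v) ∨
          ((2 * m1 : ℤ) ∣ u - m1 ∧ (2 * m2 : ℤ) ∣ v - m2) then
        (2 * m1 * m2 : ℂ) else 0 := by
  have key : ∀ k ∈ Finset.range (2 * m1) ×ˢ Finset.range (2 * m2),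
      (if Even (k.1 + k.2) then chF m1 m2 u v k else 0) =
        (1 / 2) * (chF m1 m2 u v k + chF m1 m2 (u + m1) (v + m2) k) := by
    intro k _
    have h1 : chF m1 m2 (u + m1) (v + m2) k = eps ((k.1 + k.2 : ℕ) : ℤ) * chF m1 m2 u v k := by
      rw [← chF_mul]
      have e1 : cex m1 ((m1 : ℤ) * k.1) = eps k.1 := by
        rw [mul_comm]; exact cex_mul_self hm1 _
      have e2 : cex m2 ((m2 : ℤ) * k.2) = eps k.2 := by
        rw [mul_comm]; exact cex_mul_self hm2 _
      rw [show chF m1 m2 (m1 : ℤ) (m2 : ℤ) k = eps k.1 * eps k.2 from by rw [chF, e1, e2],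
        ← eps_add, show ((k.1 : ℤ) + k.2) = ((k.1 + k.2 : ℕ) : ℤ) by push_cast; ring]
      ring
    rw [h1]
    by_cases h : Even (k.1 + k.2)
    · have he : eps ((k.1 + k.2 : ℕ) : ℤ) = 1 := by
        rw [eps, if_pos (by exact_mod_cast (Int.even_coe_nat (k.1 + k.2)).2 h)]
      rw [if_pos h, he]
      ring
    · have he : eps ((k.1 + k.2 : ℕ) : ℤ) = -1 := by
        rw [eps, if_neg (by exact_mod_cast fun hc => h ((Int.even_coe_nat (k.1 + k.2)).1 hc))]
      rw [if_neg h, he]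
      ring
  rw [egrid, Finset.sum_filter, Finset.sum_congr rfl key, ← Finset.mul_sum,
    Finset.sum_add_distrib]
  have prod_sum : ∀ u' v' : ℤ, ∑ k ∈ Finset.range (2 * m1) ×ˢ Finset.range (2 * m2),
      chF m1 m2 u' v' k =
      (if (2 * m1 : ℤ) ∣ u' then ((2 * m1 : ℕ) : ℂ) else 0) *
      (if (2 * m2 : ℤ) ∣ v' then ((2 * m2 : ℕ) : ℂ) else 0) := by
    intro u' v'
    rw [Finset.sum_product, ← geo_sum hm1 u', ← geo_sum hm2 v', Finset.sum_mul_sum]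
    rfl
  rw [prod_sum, prod_sum]
  have hu' : ((2 * m1 : ℤ) ∣ u + m1) ↔ ((2 * m1 : ℤ) ∣ u - m1) :=
    dvd_of_diff ⟨1, by ring⟩
  have hv' : ((2 * m2 : ℤ) ∣ v + m2) ↔ ((2 * m2 : ℤ) ∣ v - m2) :=
    dvd_of_diff ⟨1, by ring⟩
  have hni1 : (2 * m1 : ℤ) ∣ u → ¬ (2 * m1 : ℤ) ∣ u - m1 := fun a b => not_both_dvd hm1 u ⟨a, b⟩
  have hni2 : (2 * m2 : ℤ) ∣ v → ¬ (2 * m2 : ℤ) ∣ v - m2 := fun a b => not_both_dvd hm2 v ⟨a, b⟩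
  by_cases h1 : (2 * m1 : ℤ) ∣ u
  · by_cases h2 : (2 * m2 : ℤ) ∣ v
    · have h3 := hni1 h1
      have h4 := hni2 h2
      simp only [h1, h2, h3, h4, hu', hv', iff_true, iff_false, true_and, and_true,
        false_and, and_false, or_false, if_true, if_false, ite_true, ite_false, if_pos, if_neg,
        not_false_eq_true, true_or]
      push_cast; ring
    · have h3 := hni1 h1
      simp only [h1, h2, h3, hu', hv', iff_true, iff_false, true_and, and_true,
        false_and, and_false, or_false, false_or, if_true, if_false, ite_true, ite_false,
        not_false_eq_true]
      simp
  · by_cases h3 : (2 * m1 : ℤ) ∣ u - m1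
    · by_cases h4 : (2 * m2 : ℤ) ∣ v - m2
      · have h2 : ¬ (2 * m2 : ℤ) ∣ v := fun a => not_both_dvd hm2 v ⟨a, h4⟩
        simp only [h1, h2, h3, h4, hu', hv', iff_true, iff_false, true_and, and_true,
          false_and, and_false, or_false, false_or, or_true, true_or, if_true, if_false,
          ite_true, ite_false, not_false_eq_true]
        push_cast; ring
      · simp only [h1, h3, h4, hu', hv', iff_true, iff_false, true_and, and_true,
          false_and, and_false, or_false, false_or, if_true, if_false, ite_true, ite_false,
          not_false_eq_true]
        simp
    · simp only [h1, h3, hu', hv', iff_true, iff_false, false_and, and_false, or_false,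
        false_or, if_true, if_false, ite_true, ite_false, not_false_eq_true]
      simp

def sig (m1 m2 : ℕ) (i : ℕ × ℕ) : ℕ × ℕ :=
  ((2 * m1 - i.1) % (2 * m1), (i.2 + m2) % (2 * m2))

lemma mem_indexSet {m1 m2 : ℕ} {i : ℕ × ℕ} :
    i ∈ indexSet m1 m2 ↔ i.1 ≤ m1 ∧ i.2 < 2 * m2 ∧
      ((i.1 = 0 ∨ i.1 = m1) → i.2 < m2) ∧ (i.1 + i.2) % 2 = 0 := by
  simp [indexSet, Finset.mem_filter, Finset.mem_product, Nat.lt_succ_iff, Nat.even_iff,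
    and_assoc]

lemma sig_spec {m1 m2 : ℕ} {a b : ℕ} (hm1 : 0 < m1) (ha : a ≤ 2 * m1) (hb : b < 2 * m2) :
    sig m1 m2 (a, b) =
      ((if a = 0 ∨ a = 2 * m1 then 0 else 2 * m1 - a),
        (if b < m2 then b + m2 else b - m2)) := by
  unfold sig
  simp only [Prod.mk.injEq]
  constructor
  · split
    · rename_i h
      rcases h with h | h
      · subst h; simp [Nat.sub_zero, Nat.mod_self]
      · subst h; simp
    · rename_i h
      push_neg at h
      exact Nat.mod_eq_of_lt (by omega)
  · split
    · exact Nat.mod_eq_of_lt (by omega)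
    · rename_i h
      rw [Nat.mod_eq_sub_mod (by omega : 2 * m2 ≤ b + m2)]
      rw [show b + m2 - 2 * m2 = b - m2 by omega]
      exact Nat.mod_eq_of_lt (by omega)

lemma fold_sum {m1 m2 : ℕ} (hm1 : 0 < m1) (hm2 : 0 < m2) (hev : m2 % 2 = 0) (F : ℕ × ℕ → ℂ) :
    ∑ k ∈ egrid m1 m2, F k = ∑ i ∈ indexSet m1 m2, (F i + F (sig m1 m2 i)) := by
  have hspec : ∀ i ∈ indexSet m1 m2, sig m1 m2 i ∈ egrid m1 m2 ∧ sig m1 m2 i ∉ indexSet m1 m2 := by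
    rintro ⟨a, b⟩ hi
    rw [mem_indexSet] at hi
    obtain ⟨h1, h2, h3, h4⟩ := hi
    rw [sig_spec hm1 (by omega) h2]
    constructor
    · rw [mem_egrid]
      simp only
      split_ifs <;> omega
    · rw [mem_indexSet]
      simp only
      split_ifs <;> omega
  have hinj : ∀ x ∈ indexSet m1 m2, ∀ y ∈ indexSet m1 m2,
      sig m1 m2 x = sig m1 m2 y → x = y := by
    rintro ⟨a, b⟩ hx ⟨c, d⟩ hy h
    rw [mem_indexSet] at hx hy
    rw [sig_spec hm1 (by omega : a ≤ 2 * m1) hx.2.1, sig_spec hm1 (by omega : c ≤ 2 * m1) hy.2.1, Prod.mk.injEq] at h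
    obtain ⟨e1, e2⟩ := h
    rw [Prod.mk.injEq]
    constructor
    · split_ifs at e1 <;> omega
    · split_ifs at e2 <;> omega
  have hunion : egrid m1 m2 = indexSet m1 m2 ∪ (indexSet m1 m2).image (sig m1 m2) := by
    apply Finset.ext
    rintro ⟨a, b⟩
    simp only [Finset.mem_union, Finset.mem_image]
    constructor
    · intro h
      rw [mem_egrid] at h
      obtain ⟨h1, h2, h3⟩ := h
      by_cases hI : (a, b) ∈ indexSet m1 m2
      · exact Or.inl hI
      · right
        rw [mem_indexSet] at hI
        simp only at hI
        refine ⟨((if a = 0 then 0 else 2 * m1 - a), (if b < m2 then b + m2 else b - m2)), ?_, ?_⟩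
        · rw [mem_indexSet]
          simp only
          split_ifs <;> omega
        · rw [sig_spec hm1 (by split_ifs <;> omega) (by split_ifs <;> omega)]
          rw [Prod.mk.injEq]
          constructor
          · split_ifs <;> omega
          · split_ifs <;> omega
    · rintro (h | ⟨i, hi, heq⟩)
      · rw [mem_indexSet] at h
        rw [mem_egrid]
        omega
      · exact heq ▸ (hspec i hi).1
  have hdisj : Disjoint (indexSet m1 m2) ((indexSet m1 m2).image (sig m1 m2)) := by
    rw [Finset.disjoint_right]
    rintro x hx
    rw [Finset.mem_image] at hx
    obtain ⟨i, hi, rfl⟩ := hx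
    exact (hspec i hi).2
  rw [Finset.sum_add_distrib, hunion, Finset.sum_union hdisj, Finset.sum_image hinj]

lemma exp_eq_cex (m2 : ℕ) (v : ℤ) (b : ℕ) :
    Complex.exp (Complex.I * v * b * (π : ℂ) / m2) = cex m2 (v * b) := by
  rw [cex]; congr 1; push_cast; ring

lemma cos_eq_cex (m1 : ℕ) (u : ℤ) (a : ℕ) :
    (Real.cos ((u : ℝ) * a * π / m1) : ℂ) = (cex m1 (u * a) + cex m1 (-(u * a))) / 2 := by
  rw [Complex.ofReal_cos]
  simp only [Complex.cos, cex]
  congr 2 <;> push_cast <;> ring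

lemma sin_eq_cex (m1 : ℕ) (u : ℤ) (a : ℕ) :
    Complex.I * (Real.sin ((u : ℝ) * a * π / m1) : ℂ) =
      (cex m1 (u * a) - cex m1 (-(u * a))) / 2 := by
  rw [Complex.ofReal_sin]
  simp only [Complex.sin, cex]
  rw [show ((((u : ℝ) * a * π / m1 : ℝ) : ℂ)) * Complex.I = Complex.I * (u * a : ℤ) * π / m1 by
      push_cast; ring,
    show (-(((u : ℝ) * a * π / m1 : ℝ) : ℂ)) * Complex.I = Complex.I * (-(u * a) : ℤ) * π / m1 by
      push_cast; ring]
  have hI := Complex.I_sq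
  field_simp
  ring_nf
  rw [Complex.I_sq]
  ring

lemma chi_eq (m1 m2 : ℕ) (γ : ℤ × ℤ) (i : ℕ × ℕ) :
    chi m1 m2 γ i = (1 / 2) *
      (chF m1 m2 γ.1 γ.2 i + eps γ.2 * chF m1 m2 (-γ.1) γ.2 i) := by
  unfold chi chF eps
  by_cases h : Even γ.2
  · rw [if_pos h, if_pos h, cos_eq_cex, exp_eq_cex]
    rw [show (-γ.1 * (i.1 : ℤ)) = -(γ.1 * i.1) by ring]
    ring
  · rw [if_neg h, if_neg h, sin_eq_cex, exp_eq_cex]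
    rw [show (-γ.1 * (i.1 : ℤ)) = -(γ.1 * i.1) by ring]
    ring

lemma conj_chi (m1 m2 : ℕ) (γ : ℤ × ℤ) (i : ℕ × ℕ) :
    (starRingEnd ℂ) (chi m1 m2 γ i) = (1 / 2) *
      (chF m1 m2 (-γ.1) (-γ.2) i + eps γ.2 * chF m1 m2 γ.1 (-γ.2) i) := by
  rw [chi_eq, map_mul, map_add, map_mul, conj_chF, conj_chF, conj_eps]
  rw [show ((starRingEnd ℂ) (1 / 2) : ℂ) = 1 / 2 by rw [map_div₀, map_one, map_ofNat]]
  rw [neg_neg]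

lemma chF_sig {m1 m2 : ℕ} (hm1 : 0 < m1) (hm2 : 0 < m2) (u v : ℤ) {i : ℕ × ℕ}
    (hi1 : i.1 ≤ 2 * m1) :
    chF m1 m2 u v (sig m1 m2 i) = eps v * chF m1 m2 (-u) v i := by
  obtain ⟨a, b⟩ := i
  simp only at hi1
  unfold chF sig
  simp only
  have e1 : cex m1 (u * ((2 * m1 - a) % (2 * m1) : ℕ)) = cex m1 (-u * a) := by
    apply cex_congr hm1
    have hq := (Nat.div_add_mod (2 * m1 - a) (2 * m1)).symm
    generalize hgq : (2 * m1 - a) / (2 * m1) = q at hq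
    generalize hgr : (2 * m1 - a) % (2 * m1) = r at hq ⊢
    have hq1 : ((2 * m1 - a : ℕ) : ℤ) = 2 * m1 * q + r := by exact_mod_cast hq
    have hq' : (2 * m1 : ℤ) - a = 2 * m1 * q + r := by omega
    exact ⟨u * (1 - q), by linear_combination (-u) * hq'⟩
  have e2 : cex m2 (v * ((b + m2) % (2 * m2) : ℕ)) = cex m2 (v * b + v * m2) := by
    apply cex_congr hm2
    have hq := (Nat.div_add_mod (b + m2) (2 * m2)).symm
    generalize hgq : (b + m2) / (2 * m2) = q at hq
    generalize hgr : (b + m2) % (2 * m2) = r at hq ⊢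
    have hq' : (b : ℤ) + m2 = 2 * m2 * q + r := by exact_mod_cast hq
    exact ⟨-(v * q), by linear_combination (-v) * hq'⟩
  rw [e1, e2, cex_add, show (v * (m2 : ℤ)) = v * m2 by ring, cex_mul_self hm2]
  ring

lemma chi_sig {m1 m2 : ℕ} (hm1 : 0 < m1) (hm2 : 0 < m2) (γ : ℤ × ℤ) {i : ℕ × ℕ}
    (hi1 : i.1 ≤ 2 * m1) :
    chi m1 m2 γ (sig m1 m2 i) = chi m1 m2 γ i := by
  rw [chi_eq, chi_eq, chF_sig hm1 hm2 _ _ hi1, chF_sig hm1 hm2 _ _ hi1, neg_neg]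
  linear_combination (1 / 2) * chF m1 m2 γ.1 γ.2 i * eps_mul_self γ.2

lemma gamma_facts {m1 m2 : ℕ} (hm1 : 0 < m1) (hm2 : 0 < m2) {γ : ℤ × ℤ}
    (h : γ ∈ GammaSet m1 m2) :
    0 ≤ γ.1 ∧ γ.1 ≤ m1 ∧ -(m2 : ℤ) < γ.2 ∧ γ.2 < m2 ∧
      (γ.1 = 0 → Even γ.2) ∧ (γ.1 = (m1 : ℤ) → γ.2 = 0) ∧
      (1 ≤ γ.1 → (m2 : ℤ) * γ.1 + m1 * γ.2 ≤ m1 * m2 ∧ (m2 : ℤ) * γ.1 - m1 * γ.2 ≤ m1 * m2) ∧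
      (γ.2 ≠ 0 → (m2 : ℤ) * γ.1 + m1 * γ.2 ≠ m1 * m2) := by
  rw [GammaSet, Finset.mem_filter, Finset.mem_product, Finset.mem_Icc, Finset.mem_Icc] at h
  obtain ⟨⟨⟨h1a, h1b⟩, _, _⟩, hmain, hexcl⟩ := h
  have hm1' : (0 : ℤ) < m1 := by exact_mod_cast hm1
  have hm2' : (0 : ℤ) < m2 := by exact_mod_cast hm2
  have habs1 : (m1 : ℤ) * γ.2 ≤ m1 * |γ.2| :=
    mul_le_mul_of_nonneg_left (le_abs_self γ.2) hm1'.le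
  have habs2 : -((m1 : ℤ) * γ.2) ≤ m1 * |γ.2| := by
    rw [← mul_neg]
    exact mul_le_mul_of_nonneg_left (neg_le_abs γ.2) hm1'.le
  have habs0 : (0 : ℤ) ≤ |γ.2| := abs_nonneg _
  rcases hmain with ⟨hge1, hineq⟩ | ⟨hz, hevn, hlt⟩
  · have hγ1m2 : (m2 : ℤ) * 1 ≤ m2 * γ.1 := mul_le_mul_of_nonneg_left hge1 hm2'.le
    have habslt : (m1 : ℤ) * |γ.2| < m1 * m2 := by linarith
    have h2 : |γ.2| < (m2 : ℤ) := lt_of_mul_lt_mul_left habslt hm1'.le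
    have h2' := abs_lt.1 h2
    refine ⟨h1a, h1b, h2'.1, h2'.2, ?_, ?_, fun _ => ⟨by linarith, by linarith⟩, fun h2ne => ?_⟩
    · intro h0; exfalso; omega
    · intro hM
      rw [hM] at hineq
      have : (m1 : ℤ) * |γ.2| ≤ m1 * 0 := by linarith
      have := le_of_mul_le_mul_left this hm1'
      exact abs_eq_zero.1 (le_antisymm this habs0)
    · exact fun hc => hexcl ⟨hc, h2ne⟩
  · have h2' := abs_lt.1 hlt
    refine ⟨h1a, h1b, h2'.1, h2'.2, fun _ => hevn, ?_, fun hge1 => ?_, ?_⟩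
    · intro hM; exfalso; omega
    · exfalso; omega
    · exact fun h2ne hc => hexcl ⟨hc, h2ne⟩

lemma dvd_eq_zero_of_bounds {n t : ℤ} (hn : 0 < n) (h : n ∣ t) (h1 : -n < t) (h2 : t < n) :
    t = 0 := by
  rcases h with ⟨c, rfl⟩
  have hc1 : c < 1 := by
    by_contra hc; push_neg at hc
    have := mul_le_mul_of_nonneg_left hc hn.le
    linarith
  have hc2 : -1 < c := by
    by_contra hc; push_neg at hc
    have := mul_le_mul_of_nonneg_left hc hn.le
    linarith
  have : c = 0 := by omega
  rw [this, mul_zero]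

lemma dvd_cases_of_bounds {n t : ℤ} (hn : 0 < n) (h : n ∣ t) (h1 : -(2 * n) < t)
    (h2 : t < 2 * n) : t = -n ∨ t = 0 ∨ t = n := by
  rcases h with ⟨c, rfl⟩
  have hc1 : c < 2 := by
    by_contra hc; push_neg at hc
    have := mul_le_mul_of_nonneg_left hc hn.le
    linarith
  have hc2 : -2 < c := by
    by_contra hc; push_neg at hc
    have := mul_le_mul_of_nonneg_left hc hn.le
    linarith
  have hc : c = -1 ∨ c = 0 ∨ c = 1 := by omega
  rcases hc with rfl | rfl | rfl
  · left; ring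
  · right; left; ring
  · right; right; ring

lemma no_anti {m1 m2 : ℕ} (hm1 : 0 < m1) (hm2 : 0 < m2) {γ γ' : ℤ × ℤ}
    (hγ : γ ∈ GammaSet m1 m2) (hγ' : γ' ∈ GammaSet m1 m2)
    (hs : γ.1 + γ'.1 = m1) (hd : γ.2 - γ'.2 = m2) : False := by
  obtain ⟨hg1a, hg1b, hg2a, hg2b, hgE, hgM, hgI, hgX⟩ := gamma_facts hm1 hm2 hγ
  obtain ⟨hh1a, hh1b, hh2a, hh2b, hhE, hhM, hhI, hhX⟩ := gamma_facts hm1 hm2 hγ'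
  have hm2' : (0 : ℤ) < m2 := by exact_mod_cast hm2
  have hg2pos : 0 < γ.2 := by omega
  have hh2neg : γ'.2 < 0 := by omega
  by_cases hz : γ.1 = 0
  · have : γ'.1 = (m1 : ℤ) := by omega
    have := hhM this
    omega
  · by_cases hz' : γ'.1 = 0
    · have : γ.1 = (m1 : ℤ) := by omega
      have := hgM this
      omega
    · have hg1 : 1 ≤ γ.1 := by omega
      have hh1 : 1 ≤ γ'.1 := by omega
      obtain ⟨hA, _⟩ := hgI hg1
      obtain ⟨_, hB⟩ := hhI hh1
      have hstrict : (m2 : ℤ) * γ.1 + m1 * γ.2 < m1 * m2 :=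
        lt_of_le_of_ne hA (hgX (by omega))
      have p1 : (m2 : ℤ) * γ'.1 = m2 * m1 - m2 * γ.1 := by
        have : γ'.1 = (m1 : ℤ) - γ.1 := by omega
        rw [this]; ring
      have p2 : (m1 : ℤ) * γ'.2 = m1 * γ.2 - m1 * m2 := by
        have : γ'.2 = γ.2 - (m2 : ℤ) := by omega
        rw [this]; ring
      linarith

lemma row_orth {m1 m2 : ℕ} (hm1 : 0 < m1) (hm2 : 0 < m2) (hev : m2 % 2 = 0)
    {γ γ' : ℤ × ℤ} (hγ : γ ∈ GammaSet m1 m2) (hγ' : γ' ∈ GammaSet m1 m2) :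
    ∑ i ∈ indexSet m1 m2, chi m1 m2 γ i * (starRingEnd ℂ) (chi m1 m2 γ' i) =
      if γ = γ' then (m1 * m2 : ℂ) * (if γ.1 = 0 ∨ γ.1 = (m1 : ℤ) then 1 else 1 / 2)
      else 0 := by
  obtain ⟨hg1a, hg1b, hg2a, hg2b, hgE, hgM, hgI, hgX⟩ := gamma_facts hm1 hm2 hγ
  obtain ⟨hh1a, hh1b, hh2a, hh2b, hhE, hhM, hhI, hhX⟩ := gamma_facts hm1 hm2 hγ'
  have hm1' : (0 : ℤ) < m1 := by exact_mod_cast hm1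
  have hm2' : (0 : ℤ) < m2 := by exact_mod_cast hm2
  set F : ℕ × ℕ → ℂ := fun k => chi m1 m2 γ k * (starRingEnd ℂ) (chi m1 m2 γ' k) with hF
  have hFs : ∀ i ∈ indexSet m1 m2, F (sig m1 m2 i) = F i := by
    intro i hi
    rw [mem_indexSet] at hi
    have hi1 : i.1 ≤ 2 * m1 := by omega
    rw [hF]
    simp only
    rw [chi_sig hm1 hm2 γ hi1, chi_sig hm1 hm2 γ' hi1]
  have h2 : ∑ k ∈ egrid m1 m2, F k = 2 * ∑ i ∈ indexSet m1 m2, F i := by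
    rw [fold_sum hm1 hm2 hev F, Finset.mul_sum]
    exact Finset.sum_congr rfl fun i hi => by rw [hFs i hi]; ring
  have hexpand : ∀ k : ℕ × ℕ, F k = (1 / 4) *
      (chF m1 m2 (γ.1 - γ'.1) (γ.2 - γ'.2) k
        + eps γ'.2 * chF m1 m2 (γ.1 + γ'.1) (γ.2 - γ'.2) k
        + eps γ.2 * chF m1 m2 (-(γ.1 + γ'.1)) (γ.2 - γ'.2) k
        + eps γ.2 * eps γ'.2 * chF m1 m2 (-(γ.1 - γ'.1)) (γ.2 - γ'.2) k) := by
    intro k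
    have e11 : chF m1 m2 γ.1 γ.2 k * chF m1 m2 (-γ'.1) (-γ'.2) k =
        chF m1 m2 (γ.1 - γ'.1) (γ.2 - γ'.2) k := by
      rw [chF_mul, show γ.1 + -γ'.1 = γ.1 - γ'.1 from by ring,
        show γ.2 + -γ'.2 = γ.2 - γ'.2 from by ring]
    have e12 : chF m1 m2 γ.1 γ.2 k * chF m1 m2 γ'.1 (-γ'.2) k =
        chF m1 m2 (γ.1 + γ'.1) (γ.2 - γ'.2) k := by
      rw [chF_mul, show γ.2 + -γ'.2 = γ.2 - γ'.2 from by ring]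
    have e21 : chF m1 m2 (-γ.1) γ.2 k * chF m1 m2 (-γ'.1) (-γ'.2) k =
        chF m1 m2 (-(γ.1 + γ'.1)) (γ.2 - γ'.2) k := by
      rw [chF_mul, show -γ.1 + -γ'.1 = -(γ.1 + γ'.1) from by ring,
        show γ.2 + -γ'.2 = γ.2 - γ'.2 from by ring]
    have e22 : chF m1 m2 (-γ.1) γ.2 k * chF m1 m2 γ'.1 (-γ'.2) k =
        chF m1 m2 (-(γ.1 - γ'.1)) (γ.2 - γ'.2) k := by
      rw [chF_mul, show -γ.1 + γ'.1 = -(γ.1 - γ'.1) from by ring,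
        show γ.2 + -γ'.2 = γ.2 - γ'.2 from by ring]
    rw [hF]
    simp only
    rw [chi_eq, conj_chi]
    linear_combination (1 / 4 : ℂ) * e11 + (1 / 4 : ℂ) * eps γ'.2 * e12
      + (1 / 4 : ℂ) * eps γ.2 * e21 + (1 / 4 : ℂ) * eps γ.2 * eps γ'.2 * e22
  have h3 : ∑ k ∈ egrid m1 m2, F k = (1 / 4) *
      ((if ((2 * m1 : ℤ) ∣ γ.1 - γ'.1 ∧ (2 * m2 : ℤ) ∣ γ.2 - γ'.2) ∨
          ((2 * m1 : ℤ) ∣ (γ.1 - γ'.1) - m1 ∧ (2 * m2 : ℤ) ∣ (γ.2 - γ'.2) - m2) then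
          (2 * m1 * m2 : ℂ) else 0)
        + eps γ'.2 * (if ((2 * m1 : ℤ) ∣ γ.1 + γ'.1 ∧ (2 * m2 : ℤ) ∣ γ.2 - γ'.2) ∨
          ((2 * m1 : ℤ) ∣ (γ.1 + γ'.1) - m1 ∧ (2 * m2 : ℤ) ∣ (γ.2 - γ'.2) - m2) then
          (2 * m1 * m2 : ℂ) else 0)
        + eps γ.2 * (if ((2 * m1 : ℤ) ∣ -(γ.1 + γ'.1) ∧ (2 * m2 : ℤ) ∣ γ.2 - γ'.2) ∨
          ((2 * m1 : ℤ) ∣ -(γ.1 + γ'.1) - m1 ∧ (2 * m2 : ℤ) ∣ (γ.2 - γ'.2) - m2) then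
          (2 * m1 * m2 : ℂ) else 0)
        + eps γ.2 * eps γ'.2 * (if ((2 * m1 : ℤ) ∣ -(γ.1 - γ'.1) ∧ (2 * m2 : ℤ) ∣ γ.2 - γ'.2) ∨
          ((2 * m1 : ℤ) ∣ -(γ.1 - γ'.1) - m1 ∧ (2 * m2 : ℤ) ∣ (γ.2 - γ'.2) - m2) then
          (2 * m1 * m2 : ℂ) else 0)) := by
    rw [Finset.sum_congr rfl fun k _ => hexpand k, ← Finset.mul_sum]
    congr 1
    rw [Finset.sum_add_distrib, Finset.sum_add_distrib, Finset.sum_add_distrib,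
      ← Finset.mul_sum, ← Finset.mul_sum, ← Finset.mul_sum,
      egrid_sum hm1 hm2, egrid_sum hm1 hm2, egrid_sum hm1 hm2, egrid_sum hm1 hm2]
  have h4 : ∑ i ∈ indexSet m1 m2, F i = (1 / 2) * ∑ k ∈ egrid m1 m2, F k := by
    rw [h2]; ring
  rw [h4, h3]
  -- now pure case analysis
  have hneg1 : ∀ x : ℤ, ((2 * m1 : ℤ) ∣ -x ↔ (2 * m1 : ℤ) ∣ x) := fun x => dvd_neg
  have hneg2 : ∀ x : ℤ, ((2 * m1 : ℤ) ∣ -x - m1 ↔ (2 * m1 : ℤ) ∣ x - m1) := by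
    intro x
    rw [show -x - (m1 : ℤ) = -(x + m1) by ring, dvd_neg]
    exact dvd_of_diff ⟨1, by ring⟩
  have hn1 : ¬ (2 * m1 : ℤ) ∣ (m1 : ℤ) := by
    intro hc
    have := Int.le_of_dvd hm1' hc
    omega
  have hn2 : ¬ (2 * m2 : ℤ) ∣ (m2 : ℤ) := by
    intro hc
    have := Int.le_of_dvd hm2' hc
    omega
  by_cases hD0 : (2 * m2 : ℤ) ∣ γ.2 - γ'.2
  · have hd2 : γ.2 = γ'.2 := by
      have := dvd_eq_zero_of_bounds (by omega : (0:ℤ) < 2 * m2) hD0 (by omega) (by omega)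
      omega
    have hnD1 : ¬ (2 * m2 : ℤ) ∣ γ.2 - γ'.2 - (m2 : ℤ) := by
      intro hc
      rw [hd2, sub_self, zero_sub, dvd_neg] at hc
      exact hn2 hc
    by_cases hb : γ.1 = γ'.1
    · have hgg : γ = γ' := Prod.ext hb hd2
      rw [if_pos hgg]
      subst hgg
      by_cases hB : γ.1 = 0 ∨ γ.1 = (m1 : ℤ)
      · have h2γ : (2 * m1 : ℤ) ∣ (γ.1 + γ.1) := by
          rcases hB with h | h
          · rw [h]; simp
          · rw [h]; exact ⟨1, by ring⟩
        have heps : eps γ.2 = 1 := by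
          rw [eps, if_pos]
          rcases hB with h | h
          · exact hgE h
          · rw [hgM h]; exact Even.zero
        rw [if_pos hB, heps]
        simp only [sub_self, zero_sub, dvd_neg, dvd_zero, hn1, hn2, h2γ, hneg1, hneg2,
          true_and, and_true, and_false, false_and, true_or, or_true, or_false, false_or,
          if_true, if_false, ite_true, ite_false, not_false_eq_true, one_mul, mul_one]
        push_cast
        ring
      · have h2γ : ¬ (2 * m1 : ℤ) ∣ (γ.1 + γ.1) := by
          intro hc
          have := dvd_cases_of_bounds (by omega : (0:ℤ) < 2 * m1) hc (by omega) (by omega)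
          omega
        rw [if_neg hB]
        simp only [sub_self, zero_sub, dvd_neg, dvd_zero, hn1, hn2, h2γ, hneg1, hneg2,
          true_and, and_true, and_false, false_and, true_or, or_true, or_false, false_or,
          if_true, if_false, ite_true, ite_false, not_false_eq_true, mul_zero, add_zero]
        push_cast
        linear_combination ((m1 : ℂ) * m2 / 4) * eps_mul_self γ.2
    · have hne : γ ≠ γ' := fun h => hb (by rw [h])
      rw [if_neg hne]
      have hA : ¬ (2 * m1 : ℤ) ∣ γ.1 - γ'.1 := by
        intro hc
        have := dvd_eq_zero_of_bounds (by omega : (0:ℤ) < 2 * m1) hc (by omega) (by omega)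
        omega
      have hB : ¬ (2 * m1 : ℤ) ∣ γ.1 + γ'.1 := by
        intro hc
        have h := dvd_cases_of_bounds (by omega : (0:ℤ) < 2 * m1) hc (by omega) (by omega)
        -- γ.1 + γ'.1 ∈ {0, 2m1}: then γ.1 = γ'.1, contradiction
        rcases h with h | h | h
        · omega
        · have hz1 : γ.1 = 0 := by omega
          have hz2 : γ'.1 = 0 := by omega
          exact hb (by omega)
        ·
          omega
      simp only [hD0, hnD1, and_true, and_false, or_false, hA, hB, hneg1, hneg2, if_false]
      simp
  · by_cases hD1 : (2 * m2 : ℤ) ∣ (γ.2 - γ'.2) - m2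
    · have hd2 : γ.2 - γ'.2 = m2 ∨ γ.2 - γ'.2 = -(m2 : ℤ) := by
        have := dvd_cases_of_bounds (by omega : (0:ℤ) < 2 * m2) hD1 (by omega) (by omega)
        omega
      have hne : γ ≠ γ' := by
        intro h
        rw [h, sub_self] at hd2
        omega
      rw [if_neg hne]
      have hA : ¬ (2 * m1 : ℤ) ∣ (γ.1 - γ'.1) - m1 := by
        intro hc
        have h := dvd_cases_of_bounds (by omega : (0:ℤ) < 2 * m1) hc (by omega) (by omega)
        have hd1 : γ.1 - γ'.1 = -(m1:ℤ) ∨ γ.1 - γ'.1 = m1 := by omega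
        rcases hd1 with h1 | h1
        · -- γ.1 = 0, γ'.1 = m1, so γ'.2 = 0 and γ.2 = ±m2, contradiction
          have hz1 : γ.1 = 0 := by omega
          have hz2 : γ'.1 = (m1 : ℤ) := by omega
          have := hhM hz2
          omega
        · have hz1 : γ.1 = (m1 : ℤ) := by omega
          have hz2 : γ'.1 = 0 := by omega
          have := hgM hz1
          omega
      have hB : ¬ (2 * m1 : ℤ) ∣ (γ.1 + γ'.1) - m1 := by
        intro hc
        have h := dvd_cases_of_bounds (by omega : (0:ℤ) < 2 * m1) hc (by omega) (by omega)
        have hs : γ.1 + γ'.1 = (m1 : ℤ) := by omega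
        rcases hd2 with h2 | h2
        · exact no_anti hm1 hm2 hγ hγ' hs h2
        · exact no_anti hm1 hm2 hγ' hγ (by omega) (by omega)
      simp only [hD0, hD1, and_true, and_false, or_false, false_or, hA, hB, hneg1, hneg2,
        if_false]
      simp
    · have hne : γ ≠ γ' := by
        intro h
        rw [h, sub_self] at hD0
        exact hD0 (dvd_zero _)
      rw [if_neg hne]
      simp only [hD0, hD1, and_false, or_self, if_false]
      simp

lemma card_egrid {m1 m2 : ℕ} : (egrid m1 m2).card = 2 * m1 * m2 := by
  have h : (egrid m1 m2).card = (Finset.range (2 * m1) ×ˢ Finset.range m2).card := by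
    apply Finset.card_nbij' (fun k => (k.1, k.2 / 2)) (fun p => (p.1, 2 * p.2 + p.1 % 2))
    · rintro ⟨a, b⟩ h
      rw [Finset.mem_coe, mem_egrid] at h
      simp only at h
      simp only [Finset.mem_coe, Finset.mem_product, Finset.mem_range]
      omega
    · rintro ⟨a, b⟩ h
      simp only [Finset.mem_coe, Finset.mem_product, Finset.mem_range] at h
      rw [Finset.mem_coe, mem_egrid]
      simp only
      omega
    · rintro ⟨a, b⟩ h
      rw [Finset.mem_coe, mem_egrid] at h
      simp only at h
      simp only [Prod.mk.injEq, true_and]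
      omega
    · rintro ⟨a, b⟩ h
      simp only [Finset.mem_coe, Finset.mem_product, Finset.mem_range] at h
      simp only [Prod.mk.injEq, true_and]
      omega
  rw [h, Finset.card_product, Finset.card_range, Finset.card_range]

lemma card_indexSet {m1 m2 : ℕ} (hm1 : 0 < m1) (hm2 : 0 < m2) (hev : m2 % 2 = 0) :
    (indexSet m1 m2).card = m1 * m2 := by
  have h := fold_sum hm1 hm2 hev (fun _ => (1 : ℂ))
  simp only [Finset.sum_const, nsmul_eq_mul, mul_one] at h
  have h2 : ((egrid m1 m2).card : ℂ) = ((2 * (indexSet m1 m2).card : ℕ) : ℂ) := by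
    push_cast
    rw [h]
    ring
  have h3 : (egrid m1 m2).card = 2 * (indexSet m1 m2).card := by exact_mod_cast h2
  rw [card_egrid] at h3
  rw [mul_assoc] at h3
  exact (Nat.eq_of_mul_eq_mul_left two_pos h3).symm

noncomputable def gcount (m1 m2 : ℕ) (a : ℤ) : ℕ :=
  ((Finset.Icc (-(m2 : ℤ)) m2).filter
    (fun b => ((1 ≤ a ∧ (m2 : ℤ) * a + (m1 : ℤ) * |b| ≤ m1 * m2) ∨
        (a = 0 ∧ Even b ∧ |b| < (m2 : ℤ))) ∧
      ¬((m2 : ℤ) * a + (m1 : ℤ) * b = m1 * m2 ∧ b ≠ 0))).card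

lemma card_Gamma_sum (m1 m2 : ℕ) :
    (GammaSet m1 m2).card = ∑ a ∈ Finset.Icc (0 : ℤ) m1, gcount m1 m2 a := by
  rw [GammaSet, Finset.card_filter, Finset.sum_product]
  refine Finset.sum_congr rfl fun a _ => ?_
  rw [gcount, Finset.card_filter]

lemma gcount_zero {m1 m2 : ℕ} (hm1 : 0 < m1) (hm2 : 0 < m2) (hev : m2 % 2 = 0) :
    gcount m1 m2 0 = m2 - 1 := by
  have hm1' : (0 : ℤ) < m1 := by exact_mod_cast hm1
  rw [gcount]
  have h : ((Finset.Icc (-(m2 : ℤ)) m2).filter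
      (fun b => ((1 ≤ (0:ℤ) ∧ (m2 : ℤ) * 0 + (m1 : ℤ) * |b| ≤ m1 * m2) ∨
        ((0:ℤ) = 0 ∧ Even b ∧ |b| < (m2 : ℤ))) ∧
      ¬((m2 : ℤ) * 0 + (m1 : ℤ) * b = m1 * m2 ∧ b ≠ 0))).card
      = (Finset.Icc (-(m2 : ℤ) / 2 + 1) ((m2 : ℤ) / 2 - 1)).card := by
    apply Finset.card_nbij' (fun b => b / 2) (fun t => 2 * t)
    · intro b hb
      simp only [Finset.mem_coe, Finset.mem_filter, Finset.mem_Icc] at hb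
      obtain ⟨_, hmain, _⟩ := hb
      rcases hmain with ⟨h0, _⟩ | ⟨_, hevn, habs⟩
      · omega
      · rw [Int.even_iff] at hevn
        rw [abs_lt] at habs
        simp only [Finset.mem_coe, Finset.mem_Icc]
        omega
    · intro t ht
      simp only [Finset.mem_coe, Finset.mem_Icc] at ht
      simp only [Finset.mem_coe, Finset.mem_filter, Finset.mem_Icc]
      have habs : |2 * t| < (m2 : ℤ) := by rw [abs_lt]; omega
      refine ⟨by omega, Or.inr ⟨trivial, ⟨t, by ring⟩, habs⟩, ?_⟩
      rintro ⟨heq, hne⟩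
      rw [mul_zero, zero_add] at heq
      have : 2 * t = (m2 : ℤ) := mul_left_cancel₀ hm1'.ne' heq
      rw [abs_lt] at habs
      omega
    · intro b hb
      simp only [Finset.mem_coe, Finset.mem_filter, Finset.mem_Icc] at hb
      obtain ⟨_, hmain, _⟩ := hb
      rcases hmain with ⟨h0, _⟩ | ⟨_, hevn, _⟩
      · omega
      · rw [Int.even_iff] at hevn
        show 2 * (b / 2) = b
        omega
    · intro t _
      show 2 * t / 2 = t
      omega
  rw [h, Int.card_Icc]
  omega

lemma gcount_top {m1 m2 : ℕ} (hm1 : 0 < m1) (hm2 : 0 < m2) :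
    gcount m1 m2 m1 = 1 := by
  have hm1' : (0 : ℤ) < m1 := by exact_mod_cast hm1
  have hm2' : (0 : ℤ) < m2 := by exact_mod_cast hm2
  rw [gcount]
  have h : ((Finset.Icc (-(m2 : ℤ)) m2).filter
      (fun b => ((1 ≤ (m1:ℤ) ∧ (m2 : ℤ) * m1 + (m1 : ℤ) * |b| ≤ m1 * m2) ∨
        ((m1:ℤ) = 0 ∧ Even b ∧ |b| < (m2 : ℤ))) ∧
      ¬((m2 : ℤ) * m1 + (m1 : ℤ) * b = m1 * m2 ∧ b ≠ 0))) = {0} := by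
    apply Finset.ext
    intro b
    simp only [Finset.mem_filter, Finset.mem_Icc, Finset.mem_singleton]
    constructor
    · rintro ⟨_, hmain, _⟩
      rcases hmain with ⟨_, hineq⟩ | ⟨hz, _, _⟩
      · have hmm : (m2 : ℤ) * m1 = m1 * m2 := mul_comm _ _
        have h1 : (m1 : ℤ) * |b| ≤ m1 * 0 := by rw [mul_zero]; linarith
        have h2 : |b| ≤ 0 := le_of_mul_le_mul_left h1 hm1'
        have := abs_nonneg b
        rw [← abs_eq_zero]
        omega
      · exfalso; omega
    · rintro rfl
      have hmm : (m2 : ℤ) * m1 = m1 * m2 := mul_comm _ _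
      refine ⟨⟨by omega, by omega⟩, Or.inl ⟨by omega, by rw [abs_zero, mul_zero]; omega⟩, ?_⟩
      rintro ⟨_, hne⟩
      exact hne rfl
  rw [h, Finset.card_singleton]

lemma gcount_mid {m1 m2 : ℕ} (hm1 : 0 < m1) (hm2 : 0 < m2) {a : ℤ}
    (h1 : 1 ≤ a) (h2 : a ≤ (m1 : ℤ) - 1) :
    gcount m1 m2 a =
      (if (m1 : ℤ) ∣ (m2 : ℤ) * ((m1 : ℤ) - a) then
        2 * ((m2 : ℤ) * ((m1 : ℤ) - a) / m1).toNat
      else 2 * ((m2 : ℤ) * ((m1 : ℤ) - a) / m1).toNat + 1) := by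
  have hm1' : (0 : ℤ) < m1 := by exact_mod_cast hm1
  have hm2' : (0 : ℤ) < m2 := by exact_mod_cast hm2
  set R : ℤ := (m2 : ℤ) * ((m1 : ℤ) - a) with hR
  set q : ℤ := R / m1 with hq
  have hRpos : 0 < R := by
    apply mul_pos hm2'
    omega
  have hRle : R ≤ (m1 : ℤ) * m2 - m2 := by
    have : (m2 : ℤ) * ((m1 : ℤ) - a) ≤ m2 * ((m1 : ℤ) - 1) :=
      mul_le_mul_of_nonneg_left (by omega) hm2'.le
    rw [hR]
    linarith [this, mul_comm (m2 : ℤ) ((m1 : ℤ) - 1)]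
  have hq0 : 0 ≤ q := Int.ediv_nonneg hRpos.le hm1'.le
  have hqm2 : q < m2 := by
    by_contra hc
    push_neg at hc
    have := (Int.le_ediv_iff_mul_le hm1').1 hc
    nlinarith
  have habs_iff : ∀ b : ℤ, ((m2 : ℤ) * a + (m1 : ℤ) * |b| ≤ (m1 : ℤ) * m2 ↔ |b| ≤ q) := by
    intro b
    rw [hq, Int.le_ediv_iff_mul_le hm1']
    constructor <;> intro hh <;> nlinarith [mul_comm (|b|) (m1 : ℤ)]
  have heq_iff : ∀ b : ℤ, ((m2 : ℤ) * a + (m1 : ℤ) * b = (m1 : ℤ) * m2 ↔ (m1 : ℤ) * b = R) := by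
    intro b
    constructor <;> intro hh <;> [linarith; linarith]
  rw [gcount]
  by_cases hdvd : (m1 : ℤ) ∣ R
  · have hq1 : 1 ≤ q := by
      rw [hq]
      rw [Int.le_ediv_iff_mul_le hm1', one_mul]
      exact Int.le_of_dvd hRpos hdvd
    have hqR : (m1 : ℤ) * q = R := by
      rw [hq, mul_comm]
      exact Int.ediv_mul_cancel hdvd
    have hset : ((Finset.Icc (-(m2 : ℤ)) m2).filter
        (fun b => ((1 ≤ a ∧ (m2 : ℤ) * a + (m1 : ℤ) * |b| ≤ m1 * m2) ∨
            (a = 0 ∧ Even b ∧ |b| < (m2 : ℤ))) ∧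
          ¬((m2 : ℤ) * a + (m1 : ℤ) * b = m1 * m2 ∧ b ≠ 0))) =
        (Finset.Icc (-q) q).erase q := by
      apply Finset.ext
      intro b
      simp only [Finset.mem_filter, Finset.mem_Icc, Finset.mem_erase]
      constructor
      · rintro ⟨_, hmain, hexcl⟩
        rcases hmain with ⟨_, hineq⟩ | ⟨hz, _, _⟩
        · have hb := (habs_iff b).1 hineq
          rw [abs_le] at hb
          refine ⟨?_, hb.1, hb.2⟩
          intro hbq
          exact hexcl ⟨(heq_iff b).2 (by rw [hbq]; exact hqR), by omega⟩
        · omega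
      · rintro ⟨hbq, hb1, hb2⟩
        have habs : |b| ≤ q := abs_le.2 ⟨hb1, hb2⟩
        refine ⟨⟨by omega, by omega⟩, Or.inl ⟨h1, (habs_iff b).2 habs⟩, ?_⟩
        rintro ⟨heq, _⟩
        have := (heq_iff b).1 heq
        have : b = q := mul_left_cancel₀ hm1'.ne' (by rw [this, hqR])
        exact hbq this
    rw [hset, if_pos hdvd, Finset.card_erase_of_mem (by
      simp only [Finset.mem_Icc]; omega), Int.card_Icc]
    omega
  · have hset : ((Finset.Icc (-(m2 : ℤ)) m2).filter
        (fun b => ((1 ≤ a ∧ (m2 : ℤ) * a + (m1 : ℤ) * |b| ≤ m1 * m2) ∨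
            (a = 0 ∧ Even b ∧ |b| < (m2 : ℤ))) ∧
          ¬((m2 : ℤ) * a + (m1 : ℤ) * b = m1 * m2 ∧ b ≠ 0))) =
        Finset.Icc (-q) q := by
      apply Finset.ext
      intro b
      simp only [Finset.mem_filter, Finset.mem_Icc]
      constructor
      · rintro ⟨_, hmain, _⟩
        rcases hmain with ⟨_, hineq⟩ | ⟨hz, _, _⟩
        · have hb := (habs_iff b).1 hineq
          rw [abs_le] at hb
          exact hb
        · omega
      · rintro ⟨hb1, hb2⟩
        have habs : |b| ≤ q := abs_le.2 ⟨hb1, hb2⟩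
        refine ⟨⟨by omega, by omega⟩, Or.inl ⟨h1, (habs_iff b).2 habs⟩, ?_⟩
        rintro ⟨heq, _⟩
        exact hdvd ⟨b, by linarith [(heq_iff b).1 heq]⟩
    rw [hset, if_neg hdvd, Int.card_Icc]
    omega

lemma q_pair {m1 m2 : ℕ} (hm1 : 0 < m1) (hm2 : 0 < m2) {a : ℤ}
    (h1 : 1 ≤ a) (h2 : a ≤ (m1 : ℤ) - 1) :
    (((m1 : ℤ) ∣ (m2 : ℤ) * ((m1 : ℤ) - a)) ↔ ((m1 : ℤ) ∣ (m2 : ℤ) * a)) ∧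
      (((m1 : ℤ) ∣ (m2 : ℤ) * ((m1 : ℤ) - a)) →
        (m2 : ℤ) * ((m1 : ℤ) - a) / m1 + (m2 : ℤ) * a / m1 = m2) ∧
      ((¬ (m1 : ℤ) ∣ (m2 : ℤ) * ((m1 : ℤ) - a)) →
        (m2 : ℤ) * ((m1 : ℤ) - a) / m1 + (m2 : ℤ) * a / m1 = m2 - 1) := by
  have hm1' : (0 : ℤ) < m1 := by exact_mod_cast hm1
  set A : ℤ := (m2 : ℤ) * ((m1 : ℤ) - a) with hA
  set B : ℤ := (m2 : ℤ) * a with hB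
  have hAB : A + B = (m1 : ℤ) * m2 := by rw [hA, hB]; ring
  have hdvd_sum : (m1 : ℤ) ∣ A + B := ⟨m2, hAB⟩
  have hdiv : ((m1 : ℤ) ∣ A) ↔ ((m1 : ℤ) ∣ B) := by
    constructor <;> intro h
    · have := dvd_sub hdvd_sum h
      rwa [add_sub_cancel_left] at this
    · have := dvd_sub hdvd_sum h
      rwa [add_sub_cancel_right] at this
  have hqa := Int.mul_ediv_add_emod A m1
  have hqb := Int.mul_ediv_add_emod B m1
  have hra0 : 0 ≤ A % m1 := Int.emod_nonneg A hm1'.ne'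
  have hra1 : A % m1 < m1 := Int.emod_lt_of_pos A hm1'
  have hrb0 : 0 ≤ B % m1 := Int.emod_nonneg B hm1'.ne'
  have hrb1 : B % m1 < m1 := Int.emod_lt_of_pos B hm1'
  have hsum : (m1 : ℤ) * (A / m1) + (m1 : ℤ) * (B / m1) + (A % m1 + B % m1) = m1 * m2 := by
    linarith
  have hsd : (m1 : ℤ) ∣ A % m1 + B % m1 := ⟨m2 - A / m1 - B / m1, by linarith [mul_sub (m1:ℤ) (m2 - A/m1) (B/m1), mul_sub (m1:ℤ) m2 (A/m1)]⟩
  obtain ⟨c, hc⟩ := hsd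
  have hc0 : 0 ≤ c := by
    by_contra hcc
    push_neg at hcc
    have : c ≤ -1 := by omega
    have := mul_le_mul_of_nonneg_left this hm1'.le
    linarith
  have hc2 : c < 2 := by
    by_contra hcc
    push_neg at hcc
    have := mul_le_mul_of_nonneg_left hcc hm1'.le
    linarith
  have hcc : c = 0 ∨ c = 1 := by omega
  rcases hcc with rfl | rfl
  · rw [mul_zero] at hc
    have hA0 : A % m1 = 0 := by omega
    have hB0 : B % m1 = 0 := by omega
    have hdA : (m1 : ℤ) ∣ A := Int.dvd_of_emod_eq_zero hA0
    refine ⟨hdiv, fun _ => ?_, fun hn => absurd hdA hn⟩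
    have : (m1 : ℤ) * (A / m1 + B / m1) = m1 * m2 := by
      rw [mul_add]
      omega
    exact mul_left_cancel₀ hm1'.ne' this
  · rw [mul_one] at hc
    have hA0 : A % m1 ≠ 0 := by omega
    have hdA : ¬ (m1 : ℤ) ∣ A := fun hd => hA0 (Int.emod_eq_zero_of_dvd hd)
    refine ⟨hdiv, fun hd => absurd hd hdA, fun _ => ?_⟩
    have : (m1 : ℤ) * (A / m1 + B / m1) = m1 * (m2 - 1) := by
      rw [mul_add, mul_sub, mul_one]
      omega
    have := mul_left_cancel₀ hm1'.ne' this
    omega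

lemma card_GammaSet {m1 m2 : ℕ} (hm1 : 0 < m1) (hm2 : 0 < m2) (hev : m2 % 2 = 0) :
    (GammaSet m1 m2).card = m1 * m2 := by
  rw [card_Gamma_sum]
  have hIcc : Finset.Icc (0 : ℤ) (m1 : ℤ) =
      insert (0 : ℤ) (insert (m1 : ℤ) (Finset.Icc (1 : ℤ) ((m1 : ℤ) - 1))) := by
    apply Finset.ext
    intro x
    simp only [Finset.mem_Icc, Finset.mem_insert]
    omega
  have hm1' : (0 : ℤ) < m1 := by exact_mod_cast hm1
  rw [hIcc, Finset.sum_insert (by simp only [Finset.mem_insert, Finset.mem_Icc]; omega),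
    Finset.sum_insert (by simp only [Finset.mem_Icc]; omega)]
  have hmid : ∑ a ∈ Finset.Icc (1 : ℤ) ((m1 : ℤ) - 1), gcount m1 m2 a = (m1 - 1) * m2 := by
    have hpair : ∀ a ∈ Finset.Icc (1 : ℤ) ((m1 : ℤ) - 1),
        gcount m1 m2 a + gcount m1 m2 ((m1 : ℤ) - a) = 2 * m2 := by
      intro a ha
      rw [Finset.mem_Icc] at ha
      obtain ⟨ha1, ha2⟩ := ha
      obtain ⟨hd_iff, hd_add, hn_add⟩ := q_pair hm1 hm2 ha1 ha2
      have hsub : (m1 : ℤ) - ((m1 : ℤ) - a) = a := by ring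
      rw [gcount_mid hm1 hm2 ha1 ha2, gcount_mid hm1 hm2 (by omega) (by omega), hsub]
      have hqa0 : 0 ≤ (m2 : ℤ) * ((m1 : ℤ) - a) / m1 :=
        Int.ediv_nonneg (by nlinarith) hm1'.le
      have hqb0 : 0 ≤ (m2 : ℤ) * a / m1 := Int.ediv_nonneg (by nlinarith) hm1'.le
      by_cases hdvd : (m1 : ℤ) ∣ (m2 : ℤ) * ((m1 : ℤ) - a)
      · rw [if_pos hdvd, if_pos (hd_iff.1 hdvd)]
        have := hd_add hdvd
        omega
      · rw [if_neg hdvd, if_neg (fun hh => hdvd (hd_iff.2 hh))]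
        have := hn_add hdvd
        omega
    have hrev : ∑ a ∈ Finset.Icc (1 : ℤ) ((m1 : ℤ) - 1), gcount m1 m2 ((m1 : ℤ) - a) =
        ∑ a ∈ Finset.Icc (1 : ℤ) ((m1 : ℤ) - 1), gcount m1 m2 a := by
      apply Finset.sum_nbij' (fun a => (m1 : ℤ) - a) (fun a => (m1 : ℤ) - a)
      · intro a ha; rw [Finset.mem_Icc] at ha ⊢; omega
      · intro a ha; rw [Finset.mem_Icc] at ha ⊢; omega
      · intro a _; ring
      · intro a _; ring
      · intro a _; rfl
    have h2S : 2 * ∑ a ∈ Finset.Icc (1 : ℤ) ((m1 : ℤ) - 1), gcount m1 m2 a =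
        (m1 - 1) * (2 * m2) := by
      calc 2 * ∑ a ∈ Finset.Icc (1 : ℤ) ((m1 : ℤ) - 1), gcount m1 m2 a
          = ∑ a ∈ Finset.Icc (1 : ℤ) ((m1 : ℤ) - 1), gcount m1 m2 a
            + ∑ a ∈ Finset.Icc (1 : ℤ) ((m1 : ℤ) - 1), gcount m1 m2 ((m1 : ℤ) - a) := by
            rw [hrev]; ring
        _ = ∑ a ∈ Finset.Icc (1 : ℤ) ((m1 : ℤ) - 1),
            (gcount m1 m2 a + gcount m1 m2 ((m1 : ℤ) - a)) := by
            rw [Finset.sum_add_distrib]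
        _ = ∑ a ∈ Finset.Icc (1 : ℤ) ((m1 : ℤ) - 1), 2 * m2 :=
            Finset.sum_congr rfl hpair
        _ = (Finset.Icc (1 : ℤ) ((m1 : ℤ) - 1)).card * (2 * m2) := by
            rw [Finset.sum_const, smul_eq_mul]
        _ = (m1 - 1) * (2 * m2) := by
            rw [Int.card_Icc]
            congr 1
            omega
    have h2S' : 2 * ∑ a ∈ Finset.Icc (1 : ℤ) ((m1 : ℤ) - 1), gcount m1 m2 a =
        2 * ((m1 - 1) * m2) := by rw [h2S]; ring
    omega
  rw [gcount_zero hm1 hm2 hev, gcount_top hm1 hm2, hmid]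
  have e1 : (m1 - 1) * m2 = m1 * m2 - m2 := Nat.sub_one_mul m1 m2
  have e2 : m2 ≤ m1 * m2 := Nat.le_mul_of_pos_left m2 hm1
  omega

lemma Xgrid (m1 m2 : ℕ) (γ : ℤ × ℤ) (i : ℕ × ℕ) :
    Xbasis γ ((i.1 : ℝ) * π / m1) ((i.2 : ℝ) * π / m2) = chi m1 m2 γ i := by
  have hc : (γ.1 : ℝ) * ((i.1 : ℝ) * π / m1) = (γ.1 : ℝ) * i.1 * π / m1 := by ring
  have he : Complex.I * (γ.2 : ℂ) * (((i.2 : ℝ) * π / m2 : ℝ) : ℂ) =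
      Complex.I * γ.2 * i.2 * (π : ℂ) / m2 := by push_cast; ring
  rw [Xbasis, chi, hc, he]

lemma W_ne_zero (m1 : ℕ) (γ : ℤ × ℤ) :
    (if γ.1 = 0 ∨ γ.1 = (m1 : ℤ) then (1 : ℂ) else 1 / 2) ≠ 0 := by
  split <;> norm_num

theorem stmt16 (m1 m2 : ℕ) (hm1 : 0 < m1) (hm2 : 0 < m2) (heven : Even m2) :
    (∀ i ∈ indexSet m1 m2, ∀ j ∈ indexSet m1 m2,
      lagrange m1 m2 j (i.1 * π / m1) (i.2 * π / m2) =
        if i = j then 1 else 0) ∧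
    (∀ c : ℕ × ℕ → ℂ,
      (∀ θ φ : ℝ, (∑ i ∈ indexSet m1 m2, c i * lagrange m1 m2 i θ φ) = 0) →
      ∀ i ∈ indexSet m1 m2, c i = 0) ∧
    (∀ γ ∈ GammaSet m1 m2, ∃ d : ℕ × ℕ → ℂ, ∀ θ φ : ℝ,
      Xbasis γ θ φ = ∑ i ∈ indexSet m1 m2, d i * lagrange m1 m2 i θ φ) := by
  have hev : m2 % 2 = 0 := Nat.even_iff.1 heven
  have hMM : ((m1 : ℂ) * m2) ≠ 0 :=
    mul_ne_zero (Nat.cast_ne_zero.2 hm1.ne') (Nat.cast_ne_zero.2 hm2.ne')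
  -- The matrices
  set ι := {x // x ∈ indexSet m1 m2}
  set κ := {γ // γ ∈ GammaSet m1 m2}
  set B : Matrix ι κ ℂ := fun i g =>
    (starRingEnd ℂ) (chi m1 m2 g.1 i.1) /
      ((m1 * m2 : ℂ) * (if g.1.1 = 0 ∨ g.1.1 = (m1 : ℤ) then 1 else 1 / 2)) with hB
  set C : Matrix κ ι ℂ := fun g i => chi m1 m2 g.1 i.1 with hC
  have hCB : C * B = 1 := by
    ext g g'
    rw [Matrix.mul_apply, Matrix.one_apply]
    have hsum : ∑ i : ι, C g i * B i g' =
        (∑ i ∈ indexSet m1 m2, chi m1 m2 g.1 i * (starRingEnd ℂ) (chi m1 m2 g'.1 i)) /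
          ((m1 * m2 : ℂ) * (if g'.1.1 = 0 ∨ g'.1.1 = (m1 : ℤ) then 1 else 1 / 2)) := by
      rw [Finset.sum_div, ← Finset.sum_coe_sort (indexSet m1 m2)]
      exact Finset.sum_congr rfl fun i _ => by rw [hB, hC]; ring
    rw [hsum, row_orth hm1 hm2 hev g.2 g'.2]
    by_cases h : g.1 = g'.1
    · rw [if_pos h, if_pos (Subtype.ext h), h]
      field_simp
      have hWne : (if g'.1.1 = 0 ∨ g'.1.1 = (m1 : ℤ) then (m1 : ℂ) * m2 else (m1 : ℂ) * m2 / 2) ≠ 0 := by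
        split
        · exact hMM
        · exact div_ne_zero hMM two_ne_zero
      exact div_self (mul_ne_zero hMM (W_ne_zero m1 g'.1))
    · rw [if_neg h, if_neg (fun hc => h (congrArg Subtype.val hc)), zero_div]
  have hecard : Fintype.card κ = Fintype.card ι := by
    rw [Fintype.card_coe, Fintype.card_coe, card_GammaSet hm1 hm2 hev,
      card_indexSet hm1 hm2 hev]
  have hBC : B * C = 1 :=
    (Matrix.mul_eq_one_comm_of_equiv (Fintype.equivOfCardEq hecard)).1 hCB
  have key1 : ∀ i ∈ indexSet m1 m2, ∀ j ∈ indexSet m1 m2,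
      lagrange m1 m2 j (i.1 * π / m1) (i.2 * π / m2) = if i = j then 1 else 0 := by
    intro i hi j hj
    have hBC' := congrFun (congrFun hBC ⟨j, hj⟩) ⟨i, hi⟩
    rw [Matrix.mul_apply, Matrix.one_apply] at hBC'
    have hs : lagrange m1 m2 j (i.1 * π / m1) (i.2 * π / m2) =
        ∑ g : κ, B ⟨j, hj⟩ g * C g ⟨i, hi⟩ := by
      rw [lagrange, Finset.mul_sum, ← Finset.sum_coe_sort (GammaSet m1 m2)]
      refine Finset.sum_congr rfl fun g _ => ?_
      rw [Xgrid, hB, hC]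
      ring
    rw [hs, hBC']
    by_cases h : i = j
    · rw [if_pos h, if_pos (Subtype.ext h.symm : (⟨j, hj⟩ : ι) = ⟨i, hi⟩)]
    · rw [if_neg h, if_neg (fun hc => h (congrArg Subtype.val hc).symm)]
  refine ⟨key1, ?_, ?_⟩
  · intro c hc i hi
    have h0 := hc (i.1 * π / m1) (i.2 * π / m2)
    rw [Finset.sum_congr rfl (fun j hj => by rw [key1 i hi j hj])] at h0
    simp only [mul_ite, mul_one, mul_zero] at h0
    rwa [Finset.sum_ite_eq (indexSet m1 m2) i c, if_pos hi] at h0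
  · intro γ hγ
    refine ⟨fun i => chi m1 m2 γ i, fun θ φ => ?_⟩
    have hstep : ∀ i : ℕ × ℕ, chi m1 m2 γ i * lagrange m1 m2 i θ φ =
        ∑ γ' ∈ GammaSet m1 m2, (1 / (m1 * m2 : ℂ)) *
          ((chi m1 m2 γ i * (starRingEnd ℂ) (chi m1 m2 γ' i)) /
            (if γ'.1 = 0 ∨ γ'.1 = (m1 : ℤ) then 1 else 1 / 2)) * Xbasis γ' θ φ := by
      intro i
      rw [lagrange, Finset.mul_sum, Finset.mul_sum]
      exact Finset.sum_congr rfl fun γ' _ => by ring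
    have hinner : ∀ γ' ∈ GammaSet m1 m2,
        ∑ i ∈ indexSet m1 m2, (1 / (m1 * m2 : ℂ)) *
          ((chi m1 m2 γ i * (starRingEnd ℂ) (chi m1 m2 γ' i)) /
            (if γ'.1 = 0 ∨ γ'.1 = (m1 : ℤ) then 1 else 1 / 2)) * Xbasis γ' θ φ =
        (if γ = γ' then (1 : ℂ) else 0) * Xbasis γ' θ φ := by
      intro γ' hγ'
      rw [← Finset.sum_mul]
      congr 1
      rw [← Finset.mul_sum, ← Finset.sum_div, row_orth hm1 hm2 hev hγ hγ']
      by_cases h : γ = γ'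
      · rw [if_pos h, if_pos h, ← h]
        field_simp [hMM, W_ne_zero m1 γ]
        have hWne : (if γ.1 = 0 ∨ γ.1 = (m1 : ℤ) then (m1 : ℂ) * m2 else (m1 : ℂ) * m2 / 2) ≠ 0 := by
          split
          · exact hMM
          · exact div_ne_zero hMM two_ne_zero
        exact div_self (mul_ne_zero hMM (W_ne_zero m1 γ))
      · rw [if_neg h, if_neg h, zero_div, mul_zero]
    symm
    rw [Finset.sum_congr rfl fun i _ => hstep i, Finset.sum_comm,
      Finset.sum_congr rfl hinner]
    simp only [ite_mul, one_mul, zero_mul]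
    rw [Finset.sum_ite_eq (GammaSet m1 m2) γ (fun γ' => Xbasis γ' θ φ), if_pos hγ]
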